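/- Let Λ = ∏_{x ∈ X} R_x be a direct product of integral domains. The map η : X → Min(Λ) sending x to ker(π_x) is injective, and its image is a dense subset of Min(Λ) in the Zariski topology. Moreover {ker(π_x)} = Min(Λ) ∩ D(Δ_x), where Δ_x is the element of Λ that is 1 in coordinate x and 0 elsewhere; in particular each ker(π_x) is an isolated point of Min(Λ). -/
import Mathlib

section Aux

variable {X : Type*} [DecidableEq X] (R : X → Type*) [∀ x, CommRing (R x)]
  [∀ x, IsDomain (R x)]

lemma aux_mem_ker (x : X) (f : ∀ y, R y) :
    f ∈ RingHom.ker (Pi.evalRingHom R x) ↔ f x = 0 := by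
  simp [RingHom.mem_ker]

lemma aux_mul_single (x : X) (f : ∀ y, R y) (hf : f x = 0) :
    f * Pi.single x 1 = 0 := by
  funext y
  by_cases h : y = x
  · subst h; simp [hf]
  · simp [Pi.single_eq_of_ne h]

lemma aux_single_not_mem (x : X) :
    (Pi.single x 1 : ∀ y, R y) ∉ RingHom.ker (Pi.evalRingHom R x) := by
  simp [RingHom.mem_ker]

lemma aux_ker_le (x : X) (q : Ideal (∀ y, R y)) (hq : q.IsPrime)
    (h : (Pi.single x 1 : ∀ y, R y) ∉ q) : RingHom.ker (Pi.evalRingHom R x) ≤ q := by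
  intro f hf
  have h0 : f * Pi.single x 1 ∈ q := by
    rw [aux_mul_single R x f ((aux_mem_ker R x f).1 hf)]; exact q.zero_mem
  rcases hq.mem_or_mem h0 with h1 | h1
  · exact h1
  · exact absurd h1 h

lemma aux_ker_prime (x : X) : (RingHom.ker (Pi.evalRingHom R x)).IsPrime :=
  RingHom.ker_isPrime _

lemma aux_ker_minimal (x : X) :
    RingHom.ker (Pi.evalRingHom R x) ∈ minimalPrimes (∀ y, R y) := by
  refine ⟨⟨aux_ker_prime R x, bot_le⟩, ?_⟩
  rintro q ⟨hq, -⟩ hle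
  exact aux_ker_le R x q hq (fun h => aux_single_not_mem R x (hle h))

lemma aux_set_eq (x : X) :
    {p : {p : PrimeSpectrum (∀ x, R x) // p.asIdeal ∈ minimalPrimes (∀ x, R x)} |
        p.1.asIdeal = RingHom.ker (Pi.evalRingHom R x)} =
      {p | (Pi.single x 1 : ∀ y, R y) ∉ p.1.asIdeal} := by
  ext p
  simp only [Set.mem_setOf_eq]
  constructor
  · intro h hx
    exact aux_single_not_mem R x (h ▸ hx)
  · intro h
    have hle : RingHom.ker (Pi.evalRingHom R x) ≤ p.1.asIdeal :=
      aux_ker_le R x _ p.1.isPrime h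
    have hge : p.1.asIdeal ≤ RingHom.ker (Pi.evalRingHom R x) :=
      p.2.2 ⟨aux_ker_prime R x, bot_le⟩ hle
    exact le_antisymm hge hle

end Aux

/-- For a product `Λ` of integral domains indexed by `X`, the map `x ↦ ker π_x` into `Min(Λ)` is
injective, its image is dense in `Min(Λ)`, and `{ker π_x} = Min(Λ) ∩ D(Δ_x)`; in particular each
`ker π_x` is an isolated point of `Min(Λ)`. -/
theorem stmt6 {X : Type*} [DecidableEq X] (R : X → Type*) [∀ x, CommRing (R x)]
    [∀ x, IsDomain (R x)] :
    Function.Injective (fun x : X => RingHom.ker (Pi.evalRingHom R x)) ∧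
      Dense {p : {p : PrimeSpectrum (∀ x, R x) // p.asIdeal ∈ minimalPrimes (∀ x, R x)} |
        ∃ x : X, p.1.asIdeal = RingHom.ker (Pi.evalRingHom R x)} ∧
      (∀ x : X,
        {p : {p : PrimeSpectrum (∀ x, R x) // p.asIdeal ∈ minimalPrimes (∀ x, R x)} |
            p.1.asIdeal = RingHom.ker (Pi.evalRingHom R x)} =
          {p | (Pi.single x 1 : ∀ y, R y) ∉ p.1.asIdeal}) ∧
      ∀ x : X,
        IsOpen {p : {p : PrimeSpectrum (∀ x, R x) // p.asIdeal ∈ minimalPrimes (∀ x, R x)} |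
          p.1.asIdeal = RingHom.ker (Pi.evalRingHom R x)} := by
  refine ⟨?_, ?_, fun x => aux_set_eq R x, fun x => ?_⟩
  · intro x y hxy
    by_contra hne
    have h1 : (Pi.single y 1 : ∀ z, R z) ∈ RingHom.ker (Pi.evalRingHom R x) := by
      rw [aux_mem_ker]; exact Pi.single_eq_of_ne hne 1
    rw [show RingHom.ker (Pi.evalRingHom R x) = RingHom.ker (Pi.evalRingHom R y) from hxy] at h1
    exact aux_single_not_mem R y h1
  · rw [dense_iff_inter_open]
    rintro U hU ⟨p, hp⟩
    rw [isOpen_induced_iff] at hU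
    obtain ⟨V, hV, rfl⟩ := hU
    obtain ⟨-, ⟨f, rfl⟩, hpf, hsub⟩ :=
      PrimeSpectrum.isTopologicalBasis_basic_opens.exists_subset_of_mem_open hp hV
    have hf : f ∉ p.1.asIdeal := hpf
    have hf0 : f ≠ 0 := fun h => hf (h ▸ p.1.asIdeal.zero_mem)
    obtain ⟨x, hx⟩ := Function.ne_iff.1 hf0
    refine ⟨⟨⟨RingHom.ker (Pi.evalRingHom R x), aux_ker_prime R x⟩, aux_ker_minimal R x⟩,
      hsub ?_, x, rfl⟩
    show f ∉ RingHom.ker (Pi.evalRingHom R x)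
    rw [aux_mem_ker]
    exact hx
  · rw [aux_set_eq R x]
    have : {p : {p : PrimeSpectrum (∀ x, R x) // p.asIdeal ∈ minimalPrimes (∀ x, R x)} |
        (Pi.single x 1 : ∀ y, R y) ∉ p.1.asIdeal} =
        Subtype.val ⁻¹' (PrimeSpectrum.basicOpen (Pi.single x 1 : ∀ y, R y) : Set _) := rfl
    rw [this]
    exact (PrimeSpectrum.basicOpen _).isOpen.preimage continuous_subtype_val
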